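/- Let ε = 1/10, ξ ∈ ℝ³ with ξ ≠ 0, and let P ⊂ ℝ³ be a 2-dimensional plane or sphere with induced surface measure dS. Then there is a constant C, independent of P and ξ, such that ∫_P dS(η) / (|ξ/2 − η| · |ξ − η|^{2−ε} · |η|^{2−ε}) ≤ C / |ξ|^{3−2ε}. -/

import Mathlib

open MeasureTheory

section KMAux

open Metric Set Module
open scoped ENNReal NNReal RealInnerProductSpace

set_option maxHeartbeats 1000000

noncomputable section
local notation "E3" => EuclideanSpace ℝ (Fin 3)

lemma euclid2_ball {ρ : ℝ} (hρ : 0 ≤ ρ) :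
    μH[2] (closedBall (0 : EuclideanSpace ℝ (Fin 2)) ρ) ≤ ENNReal.ofReal (16 * ρ ^ 2) := by
  set ψ : (Fin 2 → ℝ) → EuclideanSpace ℝ (Fin 2) := ⇑(WithLp.equiv 2 (Fin 2 → ℝ)).symm with hψdef
  have hanti := PiLp.antilipschitzWith_ofLp 2 (fun _ : Fin 2 => ℝ)
  have hψlip : LipschitzWith ((2 : ℝ≥0) ^ ((1 / (2:ℝ≥0∞)).toReal)) ψ := by
    simpa [hψdef] using hanti.to_rightInverse (fun _ => rfl)
  have hψ2 : LipschitzWith 2 ψ := by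
    refine hψlip.weaken ?_
    have : ((1 : ℝ≥0∞) / 2).toReal = (1/2 : ℝ) := by simp
    rw [this]
    calc (2 : ℝ≥0) ^ ((1:ℝ)/2) ≤ (2 : ℝ≥0) ^ ((1:ℝ)) :=
          NNReal.rpow_le_rpow_of_exponent_le one_le_two (by norm_num)
      _ = 2 := NNReal.rpow_one 2
  have hsub : closedBall (0 : EuclideanSpace ℝ (Fin 2)) ρ ⊆
      ψ '' (closedBall (0 : Fin 2 → ℝ) ρ) := by
    intro x hx
    refine ⟨WithLp.equiv 2 (Fin 2 → ℝ) x, ?_, (WithLp.equiv 2 (Fin 2 → ℝ)).symm_apply_apply x⟩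
    have h1 := (PiLp.lipschitzWith_ofLp 2 (fun _ : Fin 2 => ℝ)).dist_le_mul x 0
    simp only [mem_closedBall] at hx ⊢
    calc dist (WithLp.equiv 2 (Fin 2 → ℝ) x) 0 = dist (WithLp.equiv 2 (Fin 2 → ℝ) x)
          (WithLp.equiv 2 (Fin 2 → ℝ) 0) := by norm_num
      _ ≤ 1 * dist x 0 := h1
      _ ≤ ρ := by simpa using hx
  calc μH[2] (closedBall (0 : EuclideanSpace ℝ (Fin 2)) ρ)
      ≤ μH[2] (ψ '' (closedBall (0 : Fin 2 → ℝ) ρ)) := measure_mono hsub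
    _ ≤ ((2:ℝ≥0) : ℝ≥0∞) ^ (2:ℝ) * μH[2] (closedBall (0 : Fin 2 → ℝ) ρ) :=
        hψ2.hausdorffMeasure_image_le (by norm_num) _
    _ ≤ ENNReal.ofReal (16 * ρ ^ 2) := by
        have hcard : ((Fintype.card (Fin 2) : ℝ)) = (2:ℝ) := by norm_num
        have hpi : (μH[2] : Measure (Fin 2 → ℝ)) = volume := by
          rw [← hcard]; exact hausdorffMeasure_pi_real
        rw [hpi, Real.volume_pi_closedBall 0 hρ]
        have h4 : ((2:ℝ≥0) : ℝ≥0∞) ^ (2:ℝ) = ENNReal.ofReal 4 := by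
          rw [show (2:ℝ) = ((2:ℕ):ℝ) by norm_num, ENNReal.rpow_natCast]
          rw [show ((2:ℝ≥0):ℝ≥0∞) = ENNReal.ofReal 2 by simp, ← ENNReal.ofReal_pow (by norm_num)]
          norm_num
        rw [h4, ← ENNReal.ofReal_mul (by norm_num)]
        apply ENNReal.ofReal_le_ofReal
        have : (2 * ρ) ^ Fintype.card (Fin 2) = 4 * ρ^2 := by
          simp [Fintype.card_fin]; ring
        rw [this]; nlinarith

lemma plane_ball (L : AffineSubspace ℝ E3) (hL : finrank ℝ L.direction = 2)
    (x : E3) {r : ℝ} (hr : 0 ≤ r) :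
    μH[2] ((L : Set E3) ∩ closedBall x r) ≤ ENNReal.ofReal (64 * r ^ 2) := by
  rcases Set.eq_empty_or_nonempty ((L : Set E3) ∩ closedBall x r) with he | ⟨p, hpL, hpB⟩
  · rw [he, measure_empty]; positivity
  set D := L.direction
  have b : OrthonormalBasis (Fin 2) ℝ D := (stdOrthonormalBasis ℝ D).reindex (finCongr hL)
  set φ : EuclideanSpace ℝ (Fin 2) → E3 := fun y => p + ((b.repr.symm y : D) : E3) with hφ
  have hiso : Isometry φ := by
    apply Isometry.of_dist_eq
    intro y y'
    have h1 : φ y - φ y' = ((b.repr.symm y - b.repr.symm y' : D) : E3) := by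
      simp only [hφ, Submodule.coe_sub]; abel
    rw [dist_eq_norm, h1, ← Submodule.coe_norm,
      ← LinearIsometryEquiv.norm_map b.repr, map_sub]
    simp [dist_eq_norm]
  have hsub : (L : Set E3) ∩ closedBall x r ⊆ φ '' closedBall 0 (2 * r) := by
    intro q ⟨hqL, hqB⟩
    have hmem : q - p ∈ D := by
      simpa using AffineSubspace.vsub_mem_direction hqL hpL
    refine ⟨b.repr ⟨q - p, hmem⟩, ?_, ?_⟩
    · rw [mem_closedBall, dist_zero_right, LinearIsometryEquiv.norm_map]
      rw [Submodule.coe_norm]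
      calc ‖q - p‖ = dist q p := (dist_eq_norm q p).symm
        _ ≤ dist q x + dist x p := dist_triangle _ _ _
        _ ≤ r + r := by
            have := mem_closedBall.mp hqB
            have := mem_closedBall.mp hpB
            rw [dist_comm x p] at *
            linarith
        _ = 2 * r := by ring
    · simp [hφ]
  calc μH[2] ((L : Set E3) ∩ closedBall x r) ≤ μH[2] (φ '' closedBall 0 (2*r)) :=
        measure_mono hsub
    _ = μH[2] (closedBall (0 : EuclideanSpace ℝ (Fin 2)) (2*r)) :=
        hiso.hausdorffMeasure_image (Or.inl (by norm_num)) _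
    _ ≤ ENNReal.ofReal (16 * (2*r)^2) := euclid2_ball (by linarith)
    _ = ENNReal.ofReal (64 * r^2) := by ring_nf

lemma two_pow_two : (((2:ℝ≥0) : ℝ≥0∞)) ^ (2:ℝ) = ENNReal.ofReal 4 := by
  rw [show (2:ℝ) = ((2:ℕ):ℝ) by norm_num, ENNReal.rpow_natCast]
  rw [show ((2:ℝ≥0):ℝ≥0∞) = ENNReal.ofReal 2 by simp, ← ENNReal.ofReal_pow (by norm_num)]
  norm_num

/-- measure of a spherical cap described by an inner-product condition -/
lemma cap_measure (c u : E3) (hu : ‖u‖ = 1) {R ρ : ℝ} (hR : 0 < R) (hρ0 : 0 ≤ ρ)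
    (hρ : ρ ^ 2 ≤ 2/3 * R ^ 2) :
    μH[2] {p : E3 | dist p c = R ∧ Real.sqrt (R^2 - ρ^2) ≤ ⟪p - c, u⟫} ≤
      ENNReal.ofReal (256 * ρ ^ 2) := by
  have hune : u ≠ 0 := by intro h; rw [h, norm_zero] at hu; norm_num at hu
  have hDrank' : finrank ℝ (ℝ ∙ u)ᗮ = 2 := by
    have h1 := Submodule.finrank_add_finrank_orthogonal (𝕜 := ℝ) (ℝ ∙ u)
    rw [finrank_span_singleton hune, finrank_euclideanSpace_fin] at h1
    omega
  set D : Submodule ℝ E3 := (ℝ ∙ u)ᗮ with hD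
  have hDrank : finrank ℝ D = 2 := hDrank'
  set g : E3 → ℝ := fun w => Real.sqrt (R^2 - ‖w‖^2) with hg
  set Lu : E3 → E3 := fun w => c + w + g w • u with hLu
  set Dom : Set E3 := (D : Set E3) ∩ closedBall 0 ρ with hDom
  -- lower bound for g on Dom
  have hglb : ∀ w : E3, ‖w‖ ≤ ρ → R / 2 ≤ g w := by
    intro w hw
    have h1 : ‖w‖^2 ≤ ρ^2 := by nlinarith [norm_nonneg w]
    have h2 : (R/2)^2 ≤ R^2 - ‖w‖^2 := by nlinarith
    calc R/2 = Real.sqrt ((R/2)^2) := (Real.sqrt_sq (by positivity)).symm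
      _ ≤ Real.sqrt (R^2 - ‖w‖^2) := Real.sqrt_le_sqrt h2
  have hgsq : ∀ w : E3, ‖w‖ ≤ ρ → (g w)^2 = R^2 - ‖w‖^2 := by
    intro w hw
    have h1 : ‖w‖^2 ≤ ρ^2 := by nlinarith [norm_nonneg w]
    exact Real.sq_sqrt (by nlinarith)
  have hlip : LipschitzOnWith 2 Lu Dom := by
    apply LipschitzOnWith.of_dist_le_mul
    intro w hw w' hw'
    obtain ⟨hwD, hwB⟩ := hw
    obtain ⟨hwD', hwB'⟩ := hw'
    rw [mem_closedBall, dist_zero_right] at hwB hwB'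
    have horth : ⟪w - w', u⟫ = 0 := by
      have h1 : ⟪w, u⟫ = 0 := Submodule.mem_orthogonal_singleton_iff_inner_left.mp hwD
      have h2 : ⟪w', u⟫ = 0 := Submodule.mem_orthogonal_singleton_iff_inner_left.mp hwD'
      rw [inner_sub_left, h1, h2, sub_zero]
    have hdiff : Lu w - Lu w' = (w - w') + (g w - g w') • u := by
      simp only [hLu, sub_smul]; abel
    have hnorm : ‖Lu w - Lu w'‖^2 = ‖w - w'‖^2 + (g w - g w')^2 := by
      rw [hdiff, norm_add_sq_real, real_inner_smul_right, horth, norm_smul, hu]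
      simp [mul_pow, sq_abs]
    -- bound on the sqrt difference
    have hGw := hgsq w hwB; have hGw' := hgsq w' hwB'
    have hgw0 := hglb w hwB; have hgw0' := hglb w' hwB'
    have hprod : (g w - g w') * (g w + g w') = ‖w'‖^2 - ‖w‖^2 := by
      have : (g w - g w') * (g w + g w') = (g w)^2 - (g w')^2 := by ring
      rw [this, hGw, hGw']; ring
    have hnn : |‖w‖ - ‖w'‖| ≤ ‖w - w'‖ := abs_norm_sub_norm_le _ _
    have hsum : ‖w‖ + ‖w'‖ ≤ 2 * ρ := by linarith
    have hSge : R ≤ g w + g w' := by linarith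
    have hsq : (g w - g w')^2 ≤ 3 * ‖w - w'‖^2 := by
      have h1 : (g w - g w')^2 * (g w + g w')^2 = (‖w‖ - ‖w'‖)^2 * (‖w‖ + ‖w'‖)^2 := by
        calc (g w - g w')^2 * (g w + g w')^2 = ((g w - g w') * (g w + g w'))^2 := by ring
          _ = (‖w'‖^2 - ‖w‖^2)^2 := by rw [hprod]
          _ = (‖w‖ - ‖w'‖)^2 * (‖w‖ + ‖w'‖)^2 := by ring
      have h2 : (‖w‖ - ‖w'‖)^2 ≤ ‖w - w'‖^2 := by
        have h := sq_abs (‖w‖ - ‖w'‖)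
        nlinarith [abs_nonneg (‖w‖ - ‖w'‖), norm_nonneg (w - w')]
      have h3 : (‖w‖ + ‖w'‖)^2 ≤ 4 * ρ^2 := by nlinarith [norm_nonneg w, norm_nonneg w']
      have h4 : (g w - g w')^2 * R^2 ≤ (g w - g w')^2 * (g w + g w')^2 :=
        mul_le_mul_of_nonneg_left (by nlinarith) (sq_nonneg _)
      have h5 : (‖w‖ - ‖w'‖)^2 * (‖w‖ + ‖w'‖)^2 ≤ ‖w - w'‖^2 * (4 * ρ^2) :=
        mul_le_mul h2 h3 (sq_nonneg _) (sq_nonneg _)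
      have h7 : ‖w - w'‖^2 * (4 * ρ^2) ≤ ‖w - w'‖^2 * (3 * R^2) :=
        mul_le_mul_of_nonneg_left (by nlinarith [sq_nonneg R]) (sq_nonneg _)
      have h8 : (g w - g w')^2 * R^2 ≤ (3 * ‖w - w'‖^2) * R^2 := by nlinarith
      exact (mul_le_mul_iff_left₀ (by positivity : (0:ℝ) < R^2)).mp h8
    have hfin : ‖Lu w - Lu w'‖^2 ≤ (2 * ‖w - w'‖)^2 := by nlinarith [norm_nonneg (w - w')]
    rw [dist_eq_norm, dist_eq_norm]
    push_cast
    nlinarith [norm_nonneg (Lu w - Lu w'), norm_nonneg (w - w')]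
  have hsub : {p : E3 | dist p c = R ∧ Real.sqrt (R^2 - ρ^2) ≤ ⟪p - c, u⟫} ⊆ Lu '' Dom := by
    rintro p ⟨hpR, hpt⟩
    set t : ℝ := ⟪p - c, u⟫ with ht
    have hrr : (0:ℝ) ≤ R^2 - ρ^2 := by nlinarith
    have ht0 : 0 ≤ t := le_trans (Real.sqrt_nonneg _) hpt
    have ht2 : R^2 - ρ^2 ≤ t^2 := by
      have := Real.sq_sqrt hrr
      nlinarith [Real.sqrt_nonneg (R^2 - ρ^2)]
    set w : E3 := (p - c) - t • u with hw
    have hwD : w ∈ D := by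
      rw [hD, Submodule.mem_orthogonal_singleton_iff_inner_left]
      rw [hw, inner_sub_left, real_inner_smul_left, real_inner_self_eq_norm_sq, hu]
      simp [ht]
    have hpc : ‖p - c‖ = R := by rw [← hpR, dist_eq_norm]
    have hwu : ⟪w, u⟫ = 0 := Submodule.mem_orthogonal_singleton_iff_inner_left.mp hwD
    have hdecomp : p - c = w + t • u := by rw [hw]; abel
    have hpyth : R^2 = ‖w‖^2 + t^2 := by
      rw [← hpc, hdecomp, norm_add_sq_real, real_inner_smul_right, hwu, norm_smul, hu]
      simp [mul_pow, sq_abs]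
    have hwnorm : ‖w‖ ≤ ρ := by
      have h1 : ‖w‖^2 ≤ ρ^2 := by nlinarith
      nlinarith [norm_nonneg w]
    refine ⟨w, ⟨hwD, by rwa [mem_closedBall, dist_zero_right]⟩, ?_⟩
    have hgwt : g w = t := by
      show Real.sqrt (R^2 - ‖w‖^2) = t
      have hh : R^2 - ‖w‖^2 = t^2 := by linarith
      rw [hh, Real.sqrt_sq ht0]
    show c + w + g w • u = p
    rw [hgwt, sub_eq_iff_eq_add.mp hdecomp]
    abel
  calc μH[2] {p : E3 | dist p c = R ∧ Real.sqrt (R^2 - ρ^2) ≤ ⟪p - c, u⟫}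
      ≤ μH[2] (Lu '' Dom) := measure_mono hsub
    _ ≤ ((2:ℝ≥0) : ℝ≥0∞) ^ (2:ℝ) * μH[2] Dom := hlip.hausdorffMeasure_image_le (by norm_num)
    _ ≤ ENNReal.ofReal 4 * ENNReal.ofReal (64 * ρ^2) := by
        rw [two_pow_two]
        apply mul_le_mul_right
        have hpb := plane_ball D.toAffineSubspace
          (by rw [Submodule.toAffineSubspace_direction]; exact hDrank) 0 hρ0
        have hset : ((D.toAffineSubspace : Set E3)) = (D : Set E3) := by
          ext z; exact Submodule.mem_toAffineSubspace
        rw [hset] at hpb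
        exact hpb
    _ = ENNReal.ofReal (256 * ρ^2) := by
        rw [← ENNReal.ofReal_mul (by norm_num)]; ring_nf

lemma sphere_ball (c : E3) {R : ℝ} (hR : 0 < R) (x : E3) {r : ℝ} (hr : 0 < r) :
    μH[2] (sphere c R ∩ closedBall x r) ≤ ENNReal.ofReal (16384 * r ^ 2) := by
  by_cases hcase : R ≤ 4 * r
  · -- the whole sphere is covered by six caps
    set ρ : ℝ := R * Real.sqrt (2/3) with hρdef
    have hρ0 : 0 ≤ ρ := by positivity
    have hρ2 : ρ ^ 2 = 2/3 * R^2 := by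
      rw [hρdef, mul_pow, Real.sq_sqrt (by norm_num)]; ring
    set cap : Fin 3 × Bool → Set E3 := fun z =>
      {p : E3 | dist p c = R ∧ Real.sqrt (R^2 - ρ^2) ≤
        ⟪p - c, EuclideanSpace.single z.1 (if z.2 then (1:ℝ) else -1)⟫} with hcap
    have hcover : sphere c R ∩ closedBall x r ⊆ ⋃ z : Fin 3 × Bool, cap z := by
      rintro p ⟨hp, -⟩
      have hpc : dist p c = R := mem_sphere.mp hp
      set v : E3 := p - c with hv
      have hvn : ‖v‖ = R := by rw [hv, ← dist_eq_norm]; exact hpc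
      have hsum : ∑ i, (v i)^2 = R^2 := by
        have h1 := EuclideanSpace.norm_eq v
        have h2 : ∀ i, ‖v i‖^2 = (v i)^2 := fun i => by simp [Real.norm_eq_abs, sq_abs]
        have h3 : (0:ℝ) ≤ ∑ i, (v i)^2 := by positivity
        have h4 : Real.sqrt (∑ i, ‖v i‖^2) = R := by rw [← h1]; exact hvn
        have h5 : (∑ i, ‖v i‖^2) = ∑ i, (v i)^2 := by simp [h2]
        rw [h5] at h4
        nlinarith [Real.sq_sqrt h3, h4]
      have hex : ∃ i, R^2/3 ≤ (v i)^2 := by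
        by_contra hcon
        push_neg at hcon
        have := Finset.sum_lt_sum_of_nonempty (Finset.univ_nonempty) (fun i _ => hcon i)
        rw [hsum, Finset.sum_const, Finset.card_univ] at this
        simp only [Fintype.card_fin, nsmul_eq_mul] at this
        linarith
      obtain ⟨i, hi⟩ := hex
      have habs : Real.sqrt (R^2 - ρ^2) ≤ |v i| := by
        have h1 : R^2 - ρ^2 = R^2/3 := by rw [hρ2]; ring
        rw [h1, ← Real.sqrt_sq_eq_abs]
        exact Real.sqrt_le_sqrt hi
      by_cases hs : 0 ≤ v i
      · refine mem_iUnion.mpr ⟨(i, true), hpc, ?_⟩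
        have : ⟪v, EuclideanSpace.single i ((1:ℝ))⟫ = v i := by
          rw [EuclideanSpace.inner_single_right]; simp
        simp only [if_true]
        rw [← hv, this]
        rwa [abs_of_nonneg hs] at habs
      · refine mem_iUnion.mpr ⟨(i, false), hpc, ?_⟩
        push_neg at hs
        have : ⟪v, EuclideanSpace.single i ((-1:ℝ))⟫ = -(v i) := by
          rw [EuclideanSpace.inner_single_right]; simp
        rw [show (if (false:Bool) = true then (1:ℝ) else (-1:ℝ)) = -1 by norm_num]
        rw [← hv, this]
        rwa [abs_of_neg hs] at habs
    calc μH[2] (sphere c R ∩ closedBall x r) ≤ μH[2] (⋃ z : Fin 3 × Bool, cap z) :=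
          measure_mono hcover
      _ ≤ ∑' z : Fin 3 × Bool, μH[2] (cap z) := measure_iUnion_le _
      _ ≤ ∑' _ : Fin 3 × Bool, ENNReal.ofReal (256 * ρ^2) := by
          apply ENNReal.tsum_le_tsum
          intro z
          exact cap_measure c _ (by simp; split <;> norm_num) hR hρ0 (le_of_eq hρ2)
      _ = (6:ℕ) • ENNReal.ofReal (256 * ρ^2) := by
          rw [tsum_fintype, Finset.sum_const, Finset.card_univ]
          norm_num
      _ ≤ ENNReal.ofReal (16384 * r^2) := by
          rw [nsmul_eq_mul]
          rw [show ((6:ℕ) : ℝ≥0∞) = ENNReal.ofReal 6 by norm_num,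
            ← ENNReal.ofReal_mul (by norm_num)]
          apply ENNReal.ofReal_le_ofReal
          rw [hρ2]
          nlinarith
  · -- small ball case
    push_neg at hcase
    by_cases hxc : x = c
    · have hempty : sphere c R ∩ closedBall x r = ∅ := by
        rw [eq_empty_iff_forall_notMem]
        rintro p ⟨hp, hpb⟩
        rw [mem_sphere] at hp
        rw [mem_closedBall, hxc] at hpb
        rw [hp] at hpb
        linarith
      rw [hempty, measure_empty]
      positivity
    · have hd : (0:ℝ) < ‖x - c‖ := by
        rw [norm_pos_iff, sub_ne_zero]; exact hxc
      set d : ℝ := ‖x - c‖ with hdd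
      set u : E3 := d⁻¹ • (x - c) with hu'
      have hu : ‖u‖ = 1 := by
        rw [hu', norm_smul, Real.norm_eq_abs, abs_inv, abs_of_pos hd, ← hdd,
          inv_mul_cancel₀ (ne_of_gt hd)]
      have hxeq : x = c + d • u := by
        rw [hu', smul_smul, mul_inv_cancel₀ (ne_of_gt hd), one_smul]
        abel
      have hρ2 : (2*r)^2 ≤ 2/3 * R^2 := by nlinarith
      have hsub2 : sphere c R ∩ closedBall x r ⊆
          {p : E3 | dist p c = R ∧ Real.sqrt (R^2 - (2*r)^2) ≤ ⟪p - c, u⟫} := by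
        rintro p ⟨hp, hpb⟩
        have hpc : dist p c = R := mem_sphere.mp hp
        have hpcn : ‖p - c‖ = R := by rw [← dist_eq_norm]; exact hpc
        have hpx : ‖p - x‖ ≤ r := by rw [← dist_eq_norm]; exact mem_closedBall.mp hpb
        refine ⟨hpc, ?_⟩
        have hdR : |R - d| ≤ r := by
          have h1 := abs_norm_sub_norm_le (p - c) (x - c)
          rw [sub_sub_sub_cancel_right, hpcn, ← hdd] at h1
          exact le_trans h1 hpx
        have hpq : ‖p - (c + R • u)‖ ≤ 2 * r := by
          have h1 : p - (c + R • u) = (p - x) + (x - (c + R • u)) := by abel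
          have h2 : x - (c + R • u) = (d - R) • u := by
            rw [hxeq, sub_smul]; abel
          calc ‖p - (c + R • u)‖ ≤ ‖p - x‖ + ‖x - (c + R • u)‖ := by
                rw [h1]; exact norm_add_le _ _
            _ ≤ r + |d - R| := by
                rw [h2, norm_smul, hu, Real.norm_eq_abs, mul_one]
                linarith
            _ ≤ 2 * r := by rw [abs_sub_comm]; linarith
        set t : ℝ := ⟪p - c, u⟫ with ht
        have hexp : ‖p - (c + R • u)‖^2 = R^2 - 2*R*t + R^2 := by
          have h1 : p - (c + R • u) = (p - c) - R • u := by abel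
          rw [h1, norm_sub_sq_real, real_inner_smul_right, hpcn, norm_smul, hu,
            Real.norm_eq_abs, mul_one, sq_abs, ← ht]
          ring
        have htlb : R - 2*r^2/R ≤ t := by
          have h2 : 2*R^2 - 2*R*t ≤ 4*r^2 := by
            nlinarith [norm_nonneg (p - (c + R • u))]
          have h4 : (R - 2*r^2/R) * (2*R) ≤ t * (2*R) := by
            have he : (R - 2*r^2/R) * (2*R) = 2*R^2 - 4*r^2 := by
              field_simp; ring
            rw [he]; nlinarith
          exact le_of_mul_le_mul_right h4 (by positivity)
        have hrhs : Real.sqrt (R^2 - (2*r)^2) ≤ R - 2*r^2/R := by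
          have hnn : 0 ≤ R - 2*r^2/R := by
            rw [sub_nonneg, div_le_iff₀ hR]
            nlinarith
          have hle : R^2 - (2*r)^2 ≤ (R - 2*r^2/R)^2 := by
            have hexp2 : (R - 2*r^2/R)^2 = R^2 - 4*r^2 + (2*r^2/R)^2 := by
              field_simp; ring
            nlinarith [sq_nonneg (2*r^2/R)]
          calc Real.sqrt (R^2 - (2*r)^2) ≤ Real.sqrt ((R - 2*r^2/R)^2) :=
                Real.sqrt_le_sqrt hle
            _ = R - 2*r^2/R := Real.sqrt_sq hnn
        linarith
      calc μH[2] (sphere c R ∩ closedBall x r)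
          ≤ μH[2] {p : E3 | dist p c = R ∧ Real.sqrt (R^2 - (2*r)^2) ≤ ⟪p - c, u⟫} :=
            measure_mono hsub2
        _ ≤ ENNReal.ofReal (256 * (2*r)^2) := cap_measure c u hu hR (by positivity) hρ2
        _ ≤ ENNReal.ofReal (16384 * r^2) := by
            apply ENNReal.ofReal_le_ofReal; nlinarith

lemma dyadic_inner {ν : Measure E3} {A : ℝ} (hA : 0 < A)
    (hν : ∀ (x : E3) (ρ : ℝ), 0 < ρ → ν (closedBall x ρ) ≤ ENNReal.ofReal (A * ρ^2))
    (x₀ : E3) {ρ M a : ℝ} (hρ : 0 < ρ) (hM : 0 ≤ M) (ha : 0 < a) (ha2 : a < 2)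
    (f : E3 → ℝ≥0∞) (hf0 : f x₀ = 0)
    (hf : ∀ η, dist η x₀ ≤ ρ → η ≠ x₀ → f η ≤ ENNReal.ofReal (M * (dist η x₀) ^ (-a))) :
    ∫⁻ η in closedBall x₀ ρ, f η ∂ν ≤
      ENNReal.ofReal (M * A * ((2:ℝ)^a * (1 - (2:ℝ)^(a-2))⁻¹) * ρ^(2-a)) := by
  set q : ℝ := (2:ℝ) ^ (a - 2) with hqdef
  have hq1 : q < 1 := Real.rpow_lt_one_of_one_lt_of_neg one_lt_two (by linarith)
  have hq0 : 0 < q := Real.rpow_pos_of_pos two_pos _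
  set Sh : ℕ → Set E3 := fun k =>
    closedBall x₀ (ρ * (1/2)^k) \ closedBall x₀ (ρ * (1/2)^(k+1)) with hSh
  -- coverage
  have hcover : closedBall x₀ ρ ⊆ {x₀} ∪ ⋃ k, Sh k := by
    intro η hη
    rw [mem_closedBall] at hη
    by_cases hend : η = x₀
    · exact Or.inl (by simp [hend])
    · right
      have ht0 : 0 < dist η x₀ := dist_pos.mpr hend
      have hex : ∃ n : ℕ, ρ * (1/2)^n < dist η x₀ := by
        obtain ⟨n, hn⟩ := exists_pow_lt_of_lt_one (div_pos ht0 hρ) (by norm_num : (1/2:ℝ) < 1)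
        exact ⟨n, by rw [mul_comm]; exact (lt_div_iff₀ hρ).mp hn⟩
      set k := Nat.find hex with hk
      have hspec : ρ * (1/2)^k < dist η x₀ := Nat.find_spec hex
      have hkne : k ≠ 0 := by
        intro h0
        rw [h0] at hspec
        simp at hspec
        linarith
      obtain ⟨m, hm⟩ := Nat.exists_eq_succ_of_ne_zero hkne
      have hmin : ¬ (ρ * (1/2)^m < dist η x₀) := Nat.find_min hex (by omega)
      push_neg at hmin
      refine mem_iUnion.mpr ⟨m, ?_, ?_⟩
      · rw [mem_closedBall]; exact hmin
      · rw [mem_closedBall]; push_neg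
        rw [hm] at hspec; exact hspec
  -- key real identity
  have hhalf : ∀ x : ℝ, 0 < x → (x * (1/2)) ^ (-a) = x ^ (-a) * (2:ℝ)^a := by
    intro x hx
    rw [Real.mul_rpow hx.le (by norm_num),
      show (1/2 : ℝ) = (2:ℝ)⁻¹ by norm_num,
      Real.inv_rpow (by norm_num), Real.rpow_neg (by norm_num : (0:ℝ) ≤ 2), inv_inv]
  have hkey : ∀ k : ℕ, M * (ρ * (1/2)^(k+1)) ^ (-a) * (A * (ρ * (1/2)^k)^2)
      = (M * A * (2:ℝ)^a * ρ^(2-a)) * q^k := by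
    intro k
    induction k with
    | zero =>
        rw [pow_zero, pow_one, mul_one, hhalf ρ hρ, pow_zero, mul_one]
        have h1 : ρ^(2:ℕ) = ρ ^ ((2:ℕ):ℝ) := (Real.rpow_natCast ρ 2).symm
        have h2 : ρ^(-a) * ρ^((2:ℕ):ℝ) = ρ^(2-a) := by
          rw [← Real.rpow_add hρ]; norm_num; ring_nf
        calc M * (ρ^(-a) * 2^a) * (A * ρ^2)
            = (M * A * 2^a) * (ρ^(-a) * ρ^(2:ℕ)) := by ring
          _ = (M * A * 2^a) * ρ^(2-a) := by rw [h1, h2]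
          _ = M * A * 2^a * ρ^(2-a) := by ring
    | succ k ih =>
        have hpos : (0:ℝ) < ρ * (1/2)^(k+1) := by positivity
        have hstep1 : (ρ * (1/2)^(k+2)) ^ (-a) = (ρ * (1/2)^(k+1))^(-a) * (2:ℝ)^a := by
          rw [show ρ * (1/2)^(k+2) = (ρ * (1/2)^(k+1)) * (1/2) by ring]
          exact hhalf _ hpos
        have hstep2 : (ρ * (1/2)^(k+1))^(2:ℕ) = (ρ * (1/2)^k)^(2:ℕ) * (1/4 : ℝ) := by ring
        have h22 : (2:ℝ)^(2:ℝ) = 4 := by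
          rw [show (2:ℝ) = ((2:ℕ):ℝ) from by norm_num]
          rw [Real.rpow_natCast]
          norm_num
        have hq4 : (2:ℝ)^a * (1/4 : ℝ) = q := by
          rw [hqdef, Real.rpow_sub two_pos, h22]
          ring
        calc M * (ρ * (1/2)^(k+1+1)) ^ (-a) * (A * (ρ * (1/2)^(k+1))^2)
            = (M * (ρ * (1/2)^(k+1)) ^ (-a) * (A * (ρ * (1/2)^k)^2)) * ((2:ℝ)^a * (1/4)) := by
              rw [hstep1, hstep2]; ring
          _ = ((M * A * (2:ℝ)^a * ρ^(2-a)) * q^k) * q := by rw [ih, hq4]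
          _ = (M * A * (2:ℝ)^a * ρ^(2-a)) * q^(k+1) := by ring
  -- integral bounds
  have hshell : ∀ k : ℕ, ∫⁻ η in Sh k, f η ∂ν ≤
      ENNReal.ofReal ((M * A * (2:ℝ)^a * ρ^(2-a)) * q^k) := by
    intro k
    have hub : ∀ η ∈ Sh k, f η ≤ ENNReal.ofReal (M * (ρ * (1/2)^(k+1)) ^ (-a)) := by
      rintro η ⟨h1, h2⟩
      rw [mem_closedBall] at h1 h2
      push_neg at h2
      have hdle : dist η x₀ ≤ ρ := by
        calc dist η x₀ ≤ ρ * (1/2)^k := h1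
          _ ≤ ρ * 1 := by
              apply mul_le_mul_of_nonneg_left _ hρ.le
              exact pow_le_one₀ (by norm_num) (by norm_num)
          _ = ρ := mul_one ρ
      have hne : η ≠ x₀ := by
        intro h; rw [h, dist_self] at h2
        have : (0:ℝ) < ρ * (1/2)^(k+1) := by positivity
        linarith
      refine le_trans (hf η hdle hne) (ENNReal.ofReal_le_ofReal ?_)
      apply mul_le_mul_of_nonneg_left _ hM
      exact Real.rpow_le_rpow_of_nonpos (by positivity) h2.le (by linarith)
    calc ∫⁻ η in Sh k, f η ∂ν
        ≤ ∫⁻ _ in Sh k, ENNReal.ofReal (M * (ρ * (1/2)^(k+1)) ^ (-a)) ∂ν :=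
          setLIntegral_mono measurable_const hub
      _ = ENNReal.ofReal (M * (ρ * (1/2)^(k+1)) ^ (-a)) * ν (Sh k) := setLIntegral_const _ _
      _ ≤ ENNReal.ofReal (M * (ρ * (1/2)^(k+1)) ^ (-a)) *
            ENNReal.ofReal (A * (ρ * (1/2)^k)^2) := by
          apply mul_le_mul_right
          refine le_trans (measure_mono (diff_subset)) (hν x₀ _ (by positivity))
      _ = ENNReal.ofReal ((M * A * (2:ℝ)^a * ρ^(2-a)) * q^k) := by
          rw [← ENNReal.ofReal_mul (by positivity)]
          rw [hkey k]
  calc ∫⁻ η in closedBall x₀ ρ, f η ∂ν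
      ≤ ∫⁻ η in {x₀} ∪ ⋃ k, Sh k, f η ∂ν := lintegral_mono_set hcover
    _ ≤ ∫⁻ η in {x₀}, f η ∂ν + ∫⁻ η in ⋃ k, Sh k, f η ∂ν := lintegral_union_le _ _ _
    _ ≤ 0 + ∑' k, ∫⁻ η in Sh k, f η ∂ν := by
        apply add_le_add
        · rw [lintegral_singleton, hf0, zero_mul]
        · exact lintegral_iUnion_le _ _
    _ ≤ ∑' k : ℕ, ENNReal.ofReal ((M * A * (2:ℝ)^a * ρ^(2-a)) * q^k) := by
        rw [zero_add]
        exact ENNReal.tsum_le_tsum hshell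
    _ ≤ ENNReal.ofReal (M * A * ((2:ℝ)^a * (1 - (2:ℝ)^(a-2))⁻¹) * ρ^(2-a)) := by
        have hc0 : 0 ≤ M * A * (2:ℝ)^a * ρ^(2-a) := by positivity
        have h1 : ∀ k:ℕ, ENNReal.ofReal ((M * A * (2:ℝ)^a * ρ^(2-a)) * q^k)
            = ENNReal.ofReal (M * A * (2:ℝ)^a * ρ^(2-a)) * (ENNReal.ofReal q)^k := by
          intro k
          rw [← ENNReal.ofReal_pow hq0.le, ← ENNReal.ofReal_mul hc0]
        simp_rw [h1]
        rw [ENNReal.tsum_mul_left, ENNReal.tsum_geometric]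
        have h2 : (1 : ℝ≥0∞) - ENNReal.ofReal q = ENNReal.ofReal (1 - q) := by
          rw [ENNReal.ofReal_sub 1 hq0.le, ENNReal.ofReal_one]
        rw [h2, ← ENNReal.ofReal_inv_of_pos (by linarith), ← ENNReal.ofReal_mul hc0]
        apply ENNReal.ofReal_le_ofReal
        apply le_of_eq
        rw [hqdef]
        ring

lemma dyadic_outer {ν : Measure E3} {A : ℝ} (hA : 0 < A)
    (hν : ∀ (x : E3) (ρ : ℝ), 0 < ρ → ν (closedBall x ρ) ≤ ENNReal.ofReal (A * ρ^2))
    {R' M b : ℝ} (hR' : 0 < R') (hM : 0 ≤ M) (hb : 2 < b)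
    (f : E3 → ℝ≥0∞)
    (hf : ∀ η : E3, R' < ‖η‖ → f η ≤ ENNReal.ofReal (M * ‖η‖ ^ (-b))) :
    ∫⁻ η in (closedBall (0:E3) R')ᶜ, f η ∂ν ≤
      ENNReal.ofReal (M * A * (4 * (1 - (2:ℝ)^(2-b))⁻¹) * R'^(2-b)) := by
  set q : ℝ := (2:ℝ) ^ (2 - b) with hqdef
  have hq1 : q < 1 := Real.rpow_lt_one_of_one_lt_of_neg one_lt_two (by linarith)
  have hq0 : 0 < q := Real.rpow_pos_of_pos two_pos _
  set Sh : ℕ → Set E3 := fun j =>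
    (closedBall (0:E3) (R' * 2^(j+1)) \ ball (0:E3) (R' * 2^j)) ∩ (closedBall (0:E3) R')ᶜ
    with hSh
  have hcover : (closedBall (0:E3) R')ᶜ ⊆ ⋃ j, Sh j := by
    intro η hη
    rw [mem_compl_iff, mem_closedBall, dist_zero_right, not_le] at hη
    have hex : ∃ n : ℕ, ‖η‖ < R' * 2^n := by
      obtain ⟨n, hn⟩ := pow_unbounded_of_one_lt (‖η‖ / R') (by norm_num : (1:ℝ) < 2)
      exact ⟨n, by rw [mul_comm]; exact (div_lt_iff₀ hR').mp hn⟩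
    set k := Nat.find hex with hk
    have hspec : ‖η‖ < R' * 2^k := Nat.find_spec hex
    have hkne : k ≠ 0 := by
      intro h0
      rw [h0] at hspec
      simp at hspec
      linarith
    obtain ⟨m, hm⟩ := Nat.exists_eq_succ_of_ne_zero hkne
    have hmin : ¬ (‖η‖ < R' * 2^m) := Nat.find_min hex (by omega)
    push_neg at hmin
    refine mem_iUnion.mpr ⟨m, ⟨⟨?_, ?_⟩, ?_⟩⟩
    · rw [mem_closedBall, dist_zero_right]
      rw [hm] at hspec
      exact hspec.le
    · rw [mem_ball, dist_zero_right]; push_neg; exact hmin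
    · rw [mem_compl_iff, mem_closedBall, dist_zero_right]; push_neg; exact hη
  have hdouble : ∀ x : ℝ, 0 < x → (x * 2) ^ (-b) = x ^ (-b) * (2:ℝ)^(-b) :=
    fun x hx => Real.mul_rpow hx.le (by norm_num)
  have h22 : (2:ℝ)^(2:ℝ) = 4 := by
    rw [show (2:ℝ) = ((2:ℕ):ℝ) from by norm_num, Real.rpow_natCast]
    norm_num
  have hkey : ∀ j : ℕ, M * (R' * 2^j) ^ (-b) * (A * (R' * 2^(j+1))^2)
      = (M * A * 4 * R'^(2-b)) * q^j := by
    intro j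
    induction j with
    | zero =>
        rw [pow_zero, mul_one, pow_one, pow_zero, mul_one]
        have h1 : R'^(-b) * R'^((2:ℕ):ℝ) = R'^(2-b) := by
          rw [← Real.rpow_add hR']; norm_num; ring_nf
        calc M * R' ^ (-b) * (A * (R' * 2)^2)
            = (M * A * 4) * (R'^(-b) * R'^(2:ℕ)) := by ring
          _ = (M * A * 4) * R'^(2-b) := by rw [← Real.rpow_natCast R' 2] at *; rw [h1]
          _ = M * A * 4 * R'^(2-b) := by ring
    | succ j ih =>
        have hpos : (0:ℝ) < R' * 2^j := by positivity
        have hstep1 : (R' * 2^(j+1)) ^ (-b) = (R' * 2^j)^(-b) * (2:ℝ)^(-b) := by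
          rw [show R' * 2^(j+1) = (R' * 2^j) * 2 by ring]
          exact hdouble _ hpos
        have hq4 : (2:ℝ)^(-b) * 4 = q := by
          rw [hqdef, Real.rpow_sub two_pos, h22, Real.rpow_neg (by norm_num : (0:ℝ) ≤ 2)]
          ring
        calc M * (R' * 2^(j+1)) ^ (-b) * (A * (R' * 2^(j+1+1))^2)
            = (M * (R' * 2^j) ^ (-b) * (A * (R' * 2^(j+1))^2)) * ((2:ℝ)^(-b) * 4) := by
              rw [hstep1]; ring
          _ = ((M * A * 4 * R'^(2-b)) * q^j) * q := by rw [ih, hq4]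
          _ = (M * A * 4 * R'^(2-b)) * q^(j+1) := by ring
  have hshell : ∀ j : ℕ, ∫⁻ η in Sh j, f η ∂ν ≤
      ENNReal.ofReal ((M * A * 4 * R'^(2-b)) * q^j) := by
    intro j
    have hub : ∀ η ∈ Sh j, f η ≤ ENNReal.ofReal (M * (R' * 2^j) ^ (-b)) := by
      rintro η ⟨⟨h1, h2⟩, h3⟩
      rw [mem_closedBall, dist_zero_right] at h1
      rw [mem_ball, dist_zero_right] at h2
      push_neg at h2
      rw [mem_compl_iff, mem_closedBall, dist_zero_right] at h3
      push_neg at h3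
      refine le_trans (hf η h3) (ENNReal.ofReal_le_ofReal ?_)
      apply mul_le_mul_of_nonneg_left _ hM
      exact Real.rpow_le_rpow_of_nonpos (by positivity) h2 (by linarith)
    calc ∫⁻ η in Sh j, f η ∂ν
        ≤ ∫⁻ _ in Sh j, ENNReal.ofReal (M * (R' * 2^j) ^ (-b)) ∂ν :=
          setLIntegral_mono measurable_const hub
      _ = ENNReal.ofReal (M * (R' * 2^j) ^ (-b)) * ν (Sh j) := setLIntegral_const _ _
      _ ≤ ENNReal.ofReal (M * (R' * 2^j) ^ (-b)) *
            ENNReal.ofReal (A * (R' * 2^(j+1))^2) := by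
          apply mul_le_mul_right
          refine le_trans (measure_mono ?_) (hν 0 _ (by positivity))
          exact fun η hη => hη.1.1
      _ = ENNReal.ofReal ((M * A * 4 * R'^(2-b)) * q^j) := by
          rw [← ENNReal.ofReal_mul (by positivity), hkey j]
  calc ∫⁻ η in (closedBall (0:E3) R')ᶜ, f η ∂ν
      ≤ ∫⁻ η in ⋃ j, Sh j, f η ∂ν := lintegral_mono_set hcover
    _ ≤ ∑' j, ∫⁻ η in Sh j, f η ∂ν := lintegral_iUnion_le _ _
    _ ≤ ∑' j : ℕ, ENNReal.ofReal ((M * A * 4 * R'^(2-b)) * q^j) :=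
        ENNReal.tsum_le_tsum hshell
    _ ≤ ENNReal.ofReal (M * A * (4 * (1 - (2:ℝ)^(2-b))⁻¹) * R'^(2-b)) := by
        have hc0 : 0 ≤ M * A * 4 * R'^(2-b) := by positivity
        have h1 : ∀ j:ℕ, ENNReal.ofReal ((M * A * 4 * R'^(2-b)) * q^j)
            = ENNReal.ofReal (M * A * 4 * R'^(2-b)) * (ENNReal.ofReal q)^j := by
          intro j
          rw [← ENNReal.ofReal_pow hq0.le, ← ENNReal.ofReal_mul hc0]
        simp_rw [h1]
        rw [ENNReal.tsum_mul_left, ENNReal.tsum_geometric]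
        have h2 : (1 : ℝ≥0∞) - ENNReal.ofReal q = ENNReal.ofReal (1 - q) := by
          rw [ENNReal.ofReal_sub 1 hq0.le, ENNReal.ofReal_one]
        rw [h2, ← ENNReal.ofReal_inv_of_pos (by linarith), ← ENNReal.ofReal_mul hc0]
        apply ENNReal.ofReal_le_ofReal
        apply le_of_eq
        rw [hqdef]
        ring

lemma one_div_mono3 {d1 d2 d3 b1 b2 b3 p : ℝ} (hp : 0 ≤ p)
    (h1 : 0 < b1) (h2 : 0 < b2) (h3 : 0 < b3)
    (e1 : b1 ≤ d1) (e2 : b2 ≤ d2) (e3 : b3 ≤ d3) :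
    1 / (d1 * d2^p * d3^p) ≤ 1 / (b1 * b2^p * b3^p) := by
  have hb2 : (0:ℝ) < b2^p := Real.rpow_pos_of_pos h2 p
  have hb3 : (0:ℝ) < b3^p := Real.rpow_pos_of_pos h3 p
  apply one_div_le_one_div_of_le (by exact mul_pos (mul_pos h1 hb2) hb3)
  have g2 : b2^p ≤ d2^p := Real.rpow_le_rpow h2.le e2 hp
  have g3 : b3^p ≤ d3^p := Real.rpow_le_rpow h3.le e3 hp
  have hd1 : (0:ℝ) < d1 := lt_of_lt_of_le h1 e1
  have hd2p : (0:ℝ) ≤ d2^p := Real.rpow_nonneg (le_trans h2.le e2) p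
  exact mul_le_mul (mul_le_mul e1 g2 hb2.le (by linarith)) g3 hb3.le
    (mul_nonneg hd1.le hd2p)

lemma quarter_reduce {R y z : ℝ} (hR : 0 < R) :
    ((R/4)^y)⁻¹ * (R/4)^z = (4:ℝ)^(y-z) * R^(z-y) := by
  have hR4 : (0:ℝ) < R/4 := by positivity
  rw [← Real.rpow_neg hR4.le y, ← Real.rpow_add hR4]
  rw [Real.div_rpow hR.le (by norm_num : (0:ℝ) ≤ 4), div_eq_mul_inv,
    ← Real.rpow_neg (by norm_num : (0:ℝ) ≤ 4)]
  rw [show (-(- y + z)) = y - z by ring, show (-y + z) = z - y by ring]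
  ring

lemma quarter_inv {R y : ℝ} (hR : 0 < R) : ((R/4)^y)⁻¹ = (4:ℝ)^y * R^(-y) := by
  have := quarter_reduce (y := y) (z := 0) hR
  rw [Real.rpow_zero, mul_one, sub_zero, zero_sub] at this
  exact this

lemma main_integral : ∃ K : ℝ, 0 < K ∧ ∀ (ν : Measure E3) (A : ℝ), 0 < A →
    (∀ (x : E3) (ρ : ℝ), 0 < ρ → ν (closedBall x ρ) ≤ ENNReal.ofReal (A * ρ^2)) →
    ∀ ξ : E3, ξ ≠ 0 →
    (∫⁻ η, ENNReal.ofReal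
        (1 / (‖(2 : ℝ)⁻¹ • ξ - η‖ * ‖ξ - η‖ ^ (2 - (1/10 : ℝ)) *
            ‖η‖ ^ (2 - (1/10 : ℝ)))) ∂ν)
      ≤ ENNReal.ofReal (A * K / ‖ξ‖ ^ (3 - 2 * (1/10 : ℝ))) := by
  set p : ℝ := 2 - (1/10 : ℝ) with hpdef
  have hp0 : 0 < p := by rw [hpdef]; norm_num
  have hp2 : p < 2 := by rw [hpdef]; norm_num
  have hp1 : 1/2 < p := by rw [hpdef]; norm_num
  -- geometric constants
  have hgeo1 : (2:ℝ)^((1:ℝ)-2) < 1 :=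
    Real.rpow_lt_one_of_one_lt_of_neg one_lt_two (by norm_num)
  have hgeop : (2:ℝ)^(p-2) < 1 :=
    Real.rpow_lt_one_of_one_lt_of_neg one_lt_two (by linarith)
  have hgeob : (2:ℝ)^(2-(1+2*p)) < 1 :=
    Real.rpow_lt_one_of_one_lt_of_neg one_lt_two (by rw [hpdef]; norm_num)
  set c1 : ℝ := (2:ℝ)^(1:ℝ) * (1 - (2:ℝ)^((1:ℝ)-2))⁻¹ with hc1def
  set cp : ℝ := (2:ℝ)^p * (1 - (2:ℝ)^(p-2))⁻¹ with hcpdef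
  set q4 : ℝ := (4:ℝ)^(2*p-1) with hq4def
  set K3 : ℝ := 4 * (4:ℝ)^(1+2*p) with hK3def
  set K4 : ℝ := (2:ℝ)^(1+p) * (4 * (1 - (2:ℝ)^(2-(1+2*p)))⁻¹) * (2:ℝ)^(2-(1+2*p))
    with hK4def
  have hc1pos : 0 < c1 := by
    rw [hc1def]
    have := Real.rpow_pos_of_pos two_pos (1:ℝ)
    have h2 : (0:ℝ) < (1 - (2:ℝ)^((1:ℝ)-2))⁻¹ := inv_pos.mpr (by linarith)
    positivity
  have hcppos : 0 < cp := by
    rw [hcpdef]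
    have := Real.rpow_pos_of_pos two_pos p
    have h2 : (0:ℝ) < (1 - (2:ℝ)^(p-2))⁻¹ := inv_pos.mpr (by linarith)
    positivity
  have hq4pos : 0 < q4 := by rw [hq4def]; positivity
  have hK3pos : 0 < K3 := by rw [hK3def]; positivity
  have hK4pos : 0 < K4 := by
    rw [hK4def]
    have h2 : (0:ℝ) < (1 - (2:ℝ)^(2-(1+2*p)))⁻¹ := inv_pos.mpr (by linarith)
    have := Real.rpow_pos_of_pos two_pos (1+p)
    have := Real.rpow_pos_of_pos two_pos (2-(1+2*p))
    positivity
  refine ⟨c1*q4 + cp*q4 + cp*q4 + K3 + K4, by positivity, ?_⟩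
  intro ν A hA hν ξ hξ
  set R : ℝ := ‖ξ‖ with hRdef
  have hR : 0 < R := by rw [hRdef]; exact norm_pos_iff.mpr hξ
  have hR4 : (0:ℝ) < R/4 := by positivity
  set ξh : E3 := (2:ℝ)⁻¹ • ξ with hξhdef
  have hξhn : ‖ξh‖ = R/2 := by
    rw [hξhdef, norm_smul, Real.norm_eq_abs, abs_of_pos (by norm_num : (0:ℝ) < 2⁻¹),
      ← hRdef]
    ring
  have hξmh : ‖ξ - ξh‖ = R/2 := by
    have h : ξ - ξh = ξh := by
      rw [hξhdef]
      calc ξ - (2:ℝ)⁻¹ • ξ = ((1:ℝ) - 2⁻¹) • ξ := by rw [sub_smul, one_smul]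
        _ = (2:ℝ)⁻¹ • ξ := by norm_num
    rw [h, hξhn]
  set F : E3 → ℝ≥0∞ := fun η =>
    ENNReal.ofReal (1 / (‖ξh - η‖ * ‖ξ - η‖ ^ p * ‖η‖ ^ p)) with hFdef
  -- the five sets
  set s0 : Set E3 := closedBall ξh (R/4) with hs0
  set s1 : Set E3 := closedBall 0 (R/4) with hs1
  set s2 : Set E3 := closedBall ξ (R/4) with hs2
  set s3 : Set E3 := closedBall 0 (2*R) \ (s0 ∪ s1 ∪ s2) with hs3
  set s4 : Set E3 := (closedBall (0:E3) (2*R))ᶜ with hs4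
  ----------------------------------------------------------------
  -- piece 0
  have piece0 : ∫⁻ η in s0, F η ∂ν ≤ ENNReal.ofReal (A * (c1*q4) * R^(1-2*p)) := by
    have hM : (0:ℝ) ≤ (((R/4)^(p+p))⁻¹) := by positivity
    have hf0 : F ξh = 0 := by
      rw [hFdef]
      simp
    have hf : ∀ η, dist η ξh ≤ R/4 → η ≠ ξh →
        F η ≤ ENNReal.ofReal ((((R/4)^(p+p))⁻¹) * (dist η ξh) ^ (-(1:ℝ))) := by
      intro η hdist hne
      have hd1 : (0:ℝ) < ‖ξh - η‖ := by
        rw [norm_sub_rev, ← dist_eq_norm]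
        exact dist_pos.mpr hne
      have hdist' : ‖η - ξh‖ ≤ R/4 := by rw [← dist_eq_norm]; exact hdist
      have hd2 : R/4 ≤ ‖ξ - η‖ := by
        have h1 := norm_sub_norm_le (ξ - ξh) (η - ξh)
        rw [sub_sub_sub_cancel_right, hξmh] at h1
        linarith
      have hd3 : R/4 ≤ ‖η‖ := by
        have h1 := norm_sub_norm_le ξh (ξh - η)
        rw [sub_sub_cancel, hξhn] at h1
        have h2 : ‖ξh - η‖ ≤ R/4 := by rwa [norm_sub_rev]
        linarith
      rw [hFdef]
      apply ENNReal.ofReal_le_ofReal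
      calc 1 / (‖ξh - η‖ * ‖ξ - η‖ ^ p * ‖η‖ ^ p)
          ≤ 1 / (‖ξh - η‖ * (R/4) ^ p * (R/4) ^ p) :=
            one_div_mono3 hp0.le hd1 hR4 hR4 le_rfl hd2 hd3
        _ = (((R/4)^(p+p))⁻¹) * (dist η ξh) ^ (-(1:ℝ)) := by
            rw [Real.rpow_neg_one, dist_eq_norm, ← norm_sub_rev ξh η,
              Real.rpow_add hR4 p p]
            have hq : ((R/4):ℝ)^p ≠ 0 := ne_of_gt (Real.rpow_pos_of_pos hR4 p)
            field_simp
    have hres := dyadic_inner hA hν ξh (by positivity : (0:ℝ) < R/4) hM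
      (by norm_num : (0:ℝ) < 1) (by norm_num : (1:ℝ) < 2) F hf0 hf
    refine le_trans hres (ENNReal.ofReal_le_ofReal (le_of_eq ?_))
    rw [show ((2:ℝ)-(1:ℝ)) = (1:ℝ) by norm_num, Real.rpow_one (R/4)]
    have e3 := quarter_reduce (y := p+p) (z := 1) hR
    rw [Real.rpow_one, show (p+p)-(1:ℝ) = 2*p-1 by ring,
      show (1:ℝ)-(p+p) = 1-2*p by ring] at e3
    rw [hc1def, hq4def]
    linear_combination (A * ((2:ℝ)^(1:ℝ) * (1 - (2:ℝ)^((1:ℝ)-2))⁻¹)) * e3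

  ----------------------------------------------------------------
  -- piece 1 (around 0)
  have piece1 : ∫⁻ η in s1, F η ∂ν ≤ ENNReal.ofReal (A * (cp*q4) * R^(1-2*p)) := by
    have hMp : (0:ℝ) ≤ (((R/4)^(1+p))⁻¹) := by positivity
    have hf0 : F 0 = 0 := by
      rw [hFdef]
      simp [Real.zero_rpow (ne_of_gt hp0)]
    have hf : ∀ η, dist η (0:E3) ≤ R/4 → η ≠ 0 →
        F η ≤ ENNReal.ofReal ((((R/4)^(1+p))⁻¹) * (dist η 0) ^ (-p)) := by
      intro η hdist hne
      rw [dist_zero_right] at hdist ⊢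
      have hd3 : (0:ℝ) < ‖η‖ := norm_pos_iff.mpr hne
      have hd1 : R/4 ≤ ‖ξh - η‖ := by
        have h1 := norm_sub_norm_le ξh η
        rw [hξhn] at h1
        linarith
      have hd2 : R/4 ≤ ‖ξ - η‖ := by
        have h1 := norm_sub_norm_le ξ η
        rw [← hRdef] at h1
        linarith
      rw [hFdef]
      apply ENNReal.ofReal_le_ofReal
      calc 1 / (‖ξh - η‖ * ‖ξ - η‖ ^ p * ‖η‖ ^ p)
          ≤ 1 / ((R/4) * (R/4) ^ p * ‖η‖ ^ p) :=
            one_div_mono3 hp0.le hR4 hR4 hd3 hd1 hd2 le_rfl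
        _ = (((R/4)^(1+p))⁻¹) * ‖η‖ ^ (-p) := by
            rw [Real.rpow_neg (norm_nonneg η),
              Real.rpow_add hR4 1 p, Real.rpow_one]
            have hq : ((R/4):ℝ)^p ≠ 0 := ne_of_gt (Real.rpow_pos_of_pos hR4 p)
            have hq3 : ‖η‖^p ≠ 0 := ne_of_gt (Real.rpow_pos_of_pos hd3 p)
            field_simp
    have hres := dyadic_inner hA hν (0:E3) (by positivity : (0:ℝ) < R/4) hMp
      hp0 hp2 F hf0 hf
    refine le_trans hres (ENNReal.ofReal_le_ofReal (le_of_eq ?_))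
    have e3 := quarter_reduce (y := 1+p) (z := 2-p) hR
    rw [show ((1:ℝ)+p)-(2-p) = 2*p-1 by ring,
      show ((2:ℝ)-p)-(1+p) = 1-2*p by ring] at e3
    rw [hcpdef, hq4def]
    linear_combination (A * ((2:ℝ)^p * (1 - (2:ℝ)^(p-2))⁻¹)) * e3
  ----------------------------------------------------------------
  -- piece 2 (around ξ)
  have piece2 : ∫⁻ η in s2, F η ∂ν ≤ ENNReal.ofReal (A * (cp*q4) * R^(1-2*p)) := by
    have hMp : (0:ℝ) ≤ (((R/4)^(1+p))⁻¹) := by positivity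
    have hf0 : F ξ = 0 := by
      rw [hFdef]
      simp [Real.zero_rpow (ne_of_gt hp0)]
    have hf : ∀ η, dist η ξ ≤ R/4 → η ≠ ξ →
        F η ≤ ENNReal.ofReal ((((R/4)^(1+p))⁻¹) * (dist η ξ) ^ (-p)) := by
      intro η hdist hne
      have hdist' : ‖η - ξ‖ ≤ R/4 := by rw [← dist_eq_norm]; exact hdist
      have hd2 : (0:ℝ) < ‖ξ - η‖ := by
        rw [norm_sub_rev, ← dist_eq_norm]
        exact dist_pos.mpr hne
      have hd1 : R/4 ≤ ‖ξh - η‖ := by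
        have h1 := norm_sub_norm_le (ξh - ξ) (η - ξ)
        rw [sub_sub_sub_cancel_right, norm_sub_rev ξh ξ, hξmh] at h1
        linarith
      have hd3 : R/4 ≤ ‖η‖ := by
        have h1 := norm_sub_norm_le ξ (ξ - η)
        rw [sub_sub_cancel, ← hRdef] at h1
        have h2 : ‖ξ - η‖ ≤ R/4 := by rwa [norm_sub_rev]
        linarith
      rw [hFdef]
      apply ENNReal.ofReal_le_ofReal
      calc 1 / (‖ξh - η‖ * ‖ξ - η‖ ^ p * ‖η‖ ^ p)
          ≤ 1 / ((R/4) * ‖ξ - η‖ ^ p * (R/4) ^ p) :=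
            one_div_mono3 hp0.le hR4 hd2 hR4 hd1 le_rfl hd3
        _ = (((R/4)^(1+p))⁻¹) * (dist η ξ) ^ (-p) := by
            rw [dist_eq_norm, ← norm_sub_rev ξ η,
              Real.rpow_neg (norm_nonneg (ξ - η)),
              Real.rpow_add hR4 1 p, Real.rpow_one]
            have hq : ((R/4):ℝ)^p ≠ 0 := ne_of_gt (Real.rpow_pos_of_pos hR4 p)
            have hq3 : ‖ξ - η‖^p ≠ 0 := ne_of_gt (Real.rpow_pos_of_pos hd2 p)
            field_simp
    have hres := dyadic_inner hA hν ξ (by positivity : (0:ℝ) < R/4) hMp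
      hp0 hp2 F hf0 hf
    refine le_trans hres (ENNReal.ofReal_le_ofReal (le_of_eq ?_))
    have e3 := quarter_reduce (y := 1+p) (z := 2-p) hR
    rw [show ((1:ℝ)+p)-(2-p) = 2*p-1 by ring,
      show ((2:ℝ)-p)-(1+p) = 1-2*p by ring] at e3
    rw [hcpdef, hq4def]
    linear_combination (A * ((2:ℝ)^p * (1 - (2:ℝ)^(p-2))⁻¹)) * e3
  ----------------------------------------------------------------
  -- piece 3 (intermediate region)
  have piece3 : ∫⁻ η in s3, F η ∂ν ≤ ENNReal.ofReal (A * K3 * R^(1-2*p)) := by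
    have hmerge : (R/4) * (R/4)^p * (R/4)^p = (R/4)^(1+2*p) := by
      rw [show (1+2*p : ℝ) = 1+(p+p) by ring, Real.rpow_add hR4,
        Real.rpow_add hR4, Real.rpow_one]
      ring
    have hub : ∀ η ∈ s3, F η ≤ ENNReal.ofReal (((R/4)^(1+2*p))⁻¹) := by
      rintro η ⟨hball, hnot⟩
      rw [hs0, hs1, hs2] at hnot
      simp only [mem_union, mem_closedBall, not_or, not_le] at hnot
      obtain ⟨⟨h0, h1⟩, h2⟩ := hnot
      have hd1 : R/4 ≤ ‖ξh - η‖ := by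
        rw [norm_sub_rev, ← dist_eq_norm]; exact h0.le
      have hd2 : R/4 ≤ ‖ξ - η‖ := by
        rw [norm_sub_rev, ← dist_eq_norm]; exact h2.le
      have hd3 : R/4 ≤ ‖η‖ := by
        rw [← dist_zero_right]; exact h1.le
      rw [hFdef]
      apply ENNReal.ofReal_le_ofReal
      calc 1 / (‖ξh - η‖ * ‖ξ - η‖ ^ p * ‖η‖ ^ p)
          ≤ 1 / ((R/4) * (R/4) ^ p * (R/4) ^ p) :=
            one_div_mono3 hp0.le hR4 hR4 hR4 hd1 hd2 hd3
        _ = ((R/4)^(1+2*p))⁻¹ := by rw [hmerge, one_div]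
    have er : R^(-(1+2*p)) * R^(2:ℕ) = R^(1-2*p) := by
      rw [← Real.rpow_natCast R 2, ← Real.rpow_add hR]
      rw [show (-(1+2*p) + ((2:ℕ):ℝ)) = 1-2*p by push_cast; ring]
    calc ∫⁻ η in s3, F η ∂ν
        ≤ ∫⁻ _ in s3, ENNReal.ofReal (((R/4)^(1+2*p))⁻¹) ∂ν :=
          setLIntegral_mono measurable_const hub
      _ = ENNReal.ofReal (((R/4)^(1+2*p))⁻¹) * ν s3 := setLIntegral_const _ _
      _ ≤ ENNReal.ofReal (((R/4)^(1+2*p))⁻¹) * ENNReal.ofReal (A * (2*R)^2) := by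
          apply mul_le_mul_right
          refine le_trans (measure_mono ?_) (hν 0 (2*R) (by positivity))
          rw [hs3]; exact diff_subset
      _ = ENNReal.ofReal (((R/4)^(1+2*p))⁻¹ * (A * (2*R)^2)) := by
          rw [← ENNReal.ofReal_mul (by positivity)]
      _ ≤ ENNReal.ofReal (A * K3 * R^(1-2*p)) := by
          apply ENNReal.ofReal_le_ofReal
          apply le_of_eq
          rw [hK3def, quarter_inv hR]
          linear_combination (4 * (4:ℝ)^(1+2*p) * A) * er
  ----------------------------------------------------------------
  -- piece 4 (outer region)
  have piece4 : ∫⁻ η in s4, F η ∂ν ≤ ENNReal.ofReal (A * K4 * R^(1-2*p)) := by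
    have hb : (2:ℝ) < 1+2*p := by rw [hpdef]; norm_num
    have hM4 : (0:ℝ) ≤ (2:ℝ)^(1+p) := (Real.rpow_pos_of_pos two_pos _).le
    have hf : ∀ η : E3, 2*R < ‖η‖ →
        F η ≤ ENNReal.ofReal ((2:ℝ)^(1+p) * ‖η‖ ^ (-(1+2*p))) := by
      intro η hη
      have ht0 : (0:ℝ) < ‖η‖ := lt_trans (by positivity) hη
      have hd1 : ‖η‖/2 ≤ ‖ξh - η‖ := by
        have h1 := norm_sub_norm_le η ξh
        rw [norm_sub_rev η ξh, hξhn] at h1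
        linarith
      have hd2 : ‖η‖/2 ≤ ‖ξ - η‖ := by
        have h1 := norm_sub_norm_le η ξ
        rw [norm_sub_rev η ξ, ← hRdef] at h1
        linarith
      have hhalfpow : ((‖η‖/2):ℝ)^p = ‖η‖^p * ((2:ℝ)^p)⁻¹ := by
        rw [Real.div_rpow ht0.le (by norm_num), div_eq_mul_inv]
      have hmerge : ‖η‖ * ‖η‖^p * ‖η‖^p = ‖η‖^(1+2*p) := by
        rw [show (1+2*p : ℝ) = 1+(p+p) by ring, Real.rpow_add ht0,
          Real.rpow_add ht0, Real.rpow_one]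
        ring
      rw [hFdef]
      apply ENNReal.ofReal_le_ofReal
      calc 1 / (‖ξh - η‖ * ‖ξ - η‖ ^ p * ‖η‖ ^ p)
          ≤ 1 / ((‖η‖/2) * (‖η‖/2) ^ p * ‖η‖ ^ p) :=
            one_div_mono3 hp0.le (by positivity) (by positivity) ht0 hd1 hd2 le_rfl
        _ = (2:ℝ)^(1+p) * ‖η‖ ^ (-(1+2*p)) := by
            have hstep : (‖η‖/2) * (‖η‖/2) ^ p * ‖η‖ ^ p
                = 2⁻¹ * ((2:ℝ)^p)⁻¹ * (‖η‖ * ‖η‖^p * ‖η‖^p) := by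
              rw [hhalfpow]; ring
            rw [hstep, hmerge, Real.rpow_neg ht0.le,
              show (2:ℝ)^(1+p) = 2 * (2:ℝ)^p by
                rw [Real.rpow_add two_pos, Real.rpow_one]]
            have hq1 : ((2:ℝ)^p) ≠ 0 := ne_of_gt (Real.rpow_pos_of_pos two_pos p)
            have hq2 : (‖η‖:ℝ)^(1+2*p) ≠ 0 := ne_of_gt (Real.rpow_pos_of_pos ht0 _)
            field_simp
    have hres := dyadic_outer hA hν (by positivity : (0:ℝ) < 2*R) hM4 hb F ?hf2
    case hf2 =>
      intro η hη
      exact hf η hη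
    refine le_trans hres (ENNReal.ofReal_le_ofReal (le_of_eq ?_))
    rw [hK4def, Real.mul_rpow (by norm_num : (0:ℝ) ≤ 2) hR.le]
    rw [show ((2:ℝ)-(1+2*p)) = 1-2*p by ring]
    ring
  ----------------------------------------------------------------
  -- assembly
  have hcover : (univ : Set E3) ⊆ (s0 ∪ s1 ∪ s2 ∪ s3) ∪ s4 := by
    intro η _
    by_cases h4 : η ∈ closedBall (0:E3) (2*R)
    · by_cases h012 : η ∈ s0 ∪ s1 ∪ s2
      · exact Or.inl (Or.inl h012)
      · exact Or.inl (Or.inr ⟨h4, h012⟩)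
    · exact Or.inr h4
  have hnn : (0:ℝ) ≤ R^(1-2*p) := Real.rpow_nonneg hR.le _
  calc ∫⁻ η, F η ∂ν = ∫⁻ η in univ, F η ∂ν := by rw [Measure.restrict_univ]
    _ ≤ ∫⁻ η in (s0 ∪ s1 ∪ s2 ∪ s3) ∪ s4, F η ∂ν := lintegral_mono_set hcover
    _ ≤ (∫⁻ η in s0 ∪ s1 ∪ s2 ∪ s3, F η ∂ν) + ∫⁻ η in s4, F η ∂ν :=
        lintegral_union_le _ _ _
    _ ≤ ((∫⁻ η in s0 ∪ s1 ∪ s2, F η ∂ν) + ∫⁻ η in s3, F η ∂ν) + ∫⁻ η in s4, F η ∂ν := by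
        gcongr
        exact lintegral_union_le _ _ _
    _ ≤ (((∫⁻ η in s0 ∪ s1, F η ∂ν) + ∫⁻ η in s2, F η ∂ν) + ∫⁻ η in s3, F η ∂ν)
          + ∫⁻ η in s4, F η ∂ν := by
        gcongr
        exact lintegral_union_le _ _ _
    _ ≤ ((((∫⁻ η in s0, F η ∂ν) + ∫⁻ η in s1, F η ∂ν) + ∫⁻ η in s2, F η ∂ν)
          + ∫⁻ η in s3, F η ∂ν) + ∫⁻ η in s4, F η ∂ν := by
        gcongr
        exact lintegral_union_le _ _ _
    _ ≤ ((((ENNReal.ofReal (A * (c1*q4) * R^(1-2*p)))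
          + ENNReal.ofReal (A * (cp*q4) * R^(1-2*p)))
          + ENNReal.ofReal (A * (cp*q4) * R^(1-2*p)))
          + ENNReal.ofReal (A * K3 * R^(1-2*p)))
          + ENNReal.ofReal (A * K4 * R^(1-2*p)) := by
        exact add_le_add (add_le_add (add_le_add (add_le_add piece0 piece1)
          piece2) piece3) piece4
    _ = ENNReal.ofReal (A * (c1*q4) * R^(1-2*p) + A * (cp*q4) * R^(1-2*p)
          + A * (cp*q4) * R^(1-2*p) + A * K3 * R^(1-2*p) + A * K4 * R^(1-2*p)) := by
        rw [← ENNReal.ofReal_add (by positivity) (by positivity),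
          ← ENNReal.ofReal_add (by positivity) (by positivity),
          ← ENNReal.ofReal_add (by positivity) (by positivity),
          ← ENNReal.ofReal_add (by positivity) (by positivity)]
    _ ≤ ENNReal.ofReal (A * (c1*q4 + cp*q4 + cp*q4 + K3 + K4) / R ^ (3 - 2*(1/10:ℝ))) := by
        apply ENNReal.ofReal_le_ofReal
        apply le_of_eq
        have hXe : R^(1-2*p) = (R^(3-2*(1/10:ℝ)))⁻¹ := by
          rw [show (1-2*p) = -(3-2*(1/10:ℝ)) by rw [hpdef]; ring,
            Real.rpow_neg hR.le]
        rw [hXe, div_eq_mul_inv]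
        ring

end
end KMAux

set_option maxHeartbeats 1000000 in
/-- Second Klainerman–Machedon surface integral estimate, with `ε = 1/10`:
for any 2-dimensional plane or sphere `P ⊂ ℝ³` with its induced surface measure,
`∫_P dS(η)/(|ξ/2-η| |ξ-η|^{2-ε} |η|^{2-ε}) ≤ C/|ξ|^{3-2ε}`,
with `C` independent of `P` and `ξ`. -/
theorem KM_surface_integral_estimate_two :
    ∃ C : ℝ, 0 < C ∧
      ∀ ξ : EuclideanSpace ℝ (Fin 3), ξ ≠ 0 →
        ∀ P : Set (EuclideanSpace ℝ (Fin 3)),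
          ((∃ L : AffineSubspace ℝ (EuclideanSpace ℝ (Fin 3)),
              P = (L : Set (EuclideanSpace ℝ (Fin 3))) ∧ Module.finrank ℝ L.direction = 2) ∨
           (∃ (c : EuclideanSpace ℝ (Fin 3)) (r : ℝ), 0 < r ∧ P = Metric.sphere c r)) →
          (∫⁻ η in P,
              ENNReal.ofReal
                (1 / (‖(2 : ℝ)⁻¹ • ξ - η‖ * ‖ξ - η‖ ^ (2 - (1/10 : ℝ)) *
                    ‖η‖ ^ (2 - (1/10 : ℝ)))) ∂(μH[2]))
            ≤ ENNReal.ofReal (C / ‖ξ‖ ^ (3 - 2 * (1/10 : ℝ))) := by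
  obtain ⟨K, hK, hmain⟩ := main_integral
  refine ⟨16384 * K, by positivity, ?_⟩
  intro ξ hξ P hP
  set ν : Measure (EuclideanSpace ℝ (Fin 3)) := (μH[2]).restrict P with hν
  have hreg : ∀ (x : EuclideanSpace ℝ (Fin 3)) (ρ : ℝ), 0 < ρ →
      ν (Metric.closedBall x ρ) ≤ ENNReal.ofReal (16384 * ρ^2) := by
    intro x ρ hρ
    rw [hν, Measure.restrict_apply measurableSet_closedBall]
    rcases hP with ⟨L, hPL, hL⟩ | ⟨c, r0, hr0, hPs⟩
    · rw [hPL, Set.inter_comm]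
      exact le_trans (plane_ball L hL x hρ.le)
        (ENNReal.ofReal_le_ofReal (by nlinarith))
    · rw [hPs, Set.inter_comm]
      exact sphere_ball c hr0 x hρ
  exact hmain ν 16384 (by norm_num) hreg ξ hξ
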